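/- For every (a, b) ∈ Ω, both components of Ψ(a, b) lie in Hⁿ and Φ(Ψ(a, b)) = (a, b). Together with the identity Ψ ∘ Φ = id on Hⁿ × Hⁿ, this shows the Pogorelov map Φ restricted to Hⁿ × Hⁿ is a bijection onto Ω with inverse Ψ. -/

import Mathlib

open scoped BigOperators

noncomputable section

/-- The Minkowski product on `ℝ^{n+1}`: `⟨x,y⟩ = -x₀y₀ + ∑_{i=1}^n xᵢyᵢ`. -/
def mink {n : ℕ} (x y : Fin (n + 1) → ℝ) : ℝ :=
  -(x 0 * y 0) + ∑ i : Fin n, x i.succ * y i.succ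

/-- The vector `e = (1, 0, …, 0)` in `ℝ^{n+1}`. -/
def eVec (n : ℕ) : Fin (n + 1) → ℝ := fun i => if i = 0 then 1 else 0

/-- Projection `𝒫 : ℝ^{n+1} → ℝⁿ`, forgetting the 0-th coordinate, landing in
Euclidean space (with the Euclidean norm). -/
def proj {n : ℕ} (x : Fin (n + 1) → ℝ) : EuclideanSpace ℝ (Fin n) :=
  WithLp.toLp 2 (fun i => x i.succ)

/-- The hyperboloid model `Hⁿ = {x : ⟨x,x⟩ = -1, x₀ > 0}`. -/
def Hyp (n : ℕ) : Set (Fin (n + 1) → ℝ) := {x | mink x x = -1 ∧ 0 < x 0}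

/-- First component of the Pogorelov map: `P₁(x,y) = 2𝒫(x)/(-⟨x+y,e⟩)`. -/
def P1 {n : ℕ} (x y : Fin (n + 1) → ℝ) : EuclideanSpace ℝ (Fin n) :=
  (2 / (-(mink (x + y) (eVec n)))) • proj x

/-- Second component of the Pogorelov map: `P₂(x,y) = 2𝒫(y)/(-⟨x+y,e⟩)`. -/
def P2 {n : ℕ} (x y : Fin (n + 1) → ℝ) : EuclideanSpace ℝ (Fin n) :=
  (2 / (-(mink (x + y) (eVec n)))) • proj y

/-- The function `f(a,b) = (2+‖a‖+‖b‖)(2-‖a‖+‖b‖)(2+‖a‖-‖b‖)(2-‖a‖-‖b‖)`. -/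
def fQ {n : ℕ} (a b : EuclideanSpace ℝ (Fin n)) : ℝ :=
  (2 + ‖a‖ + ‖b‖) * (2 - ‖a‖ + ‖b‖) * (2 + ‖a‖ - ‖b‖) * (2 - ‖a‖ - ‖b‖)

/-- The vector in `ℝ^{n+1}` with 0-th coordinate `t` and `𝒫`-projection `v`. -/
def liftVec {n : ℕ} (t : ℝ) (v : EuclideanSpace ℝ (Fin n)) : Fin (n + 1) → ℝ :=
  Fin.cons t (fun i => v i)

/-- First component of `Ψ(a,b)`, namely `(√(‖x̂‖²+1), x̂)` with `x̂ = 4a/√f(a,b)`. -/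
def Psi1 {n : ℕ} (a b : EuclideanSpace ℝ (Fin n)) : Fin (n + 1) → ℝ :=
  liftVec (Real.sqrt (‖(4 / Real.sqrt (fQ a b)) • a‖ ^ 2 + 1)) ((4 / Real.sqrt (fQ a b)) • a)

/-- Second component of `Ψ(a,b)`, namely `(√(‖ŷ‖²+1), ŷ)` with `ŷ = 4b/√f(a,b)`. -/
def Psi2 {n : ℕ} (a b : EuclideanSpace ℝ (Fin n)) : Fin (n + 1) → ℝ :=
  liftVec (Real.sqrt (‖(4 / Real.sqrt (fQ a b)) • b‖ ^ 2 + 1)) ((4 / Real.sqrt (fQ a b)) • b)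

lemma mink_e' {n : ℕ} (x : Fin (n + 1) → ℝ) : mink x (eVec n) = -(x 0) := by
  unfold mink eVec
  simp [Fin.succ_ne_zero]

lemma proj_lift' {n : ℕ} (t : ℝ) (v : EuclideanSpace ℝ (Fin n)) : proj (liftVec t v) = v := by
  ext i; simp [proj, liftVec]

lemma sum_sq_eq' {n : ℕ} (v : EuclideanSpace ℝ (Fin n)) : ∑ i : Fin n, v i * v i = ‖v‖ ^ 2 := by
  rw [← real_inner_self_eq_norm_sq]
  simp [PiLp.inner_apply]
  rw [EuclideanSpace.real_norm_sq_eq]; simp [sq]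

lemma mink_lift_self' {n : ℕ} (t : ℝ) (v : EuclideanSpace ℝ (Fin n)) :
    mink (liftVec t v) (liftVec t v) = -(t * t) + ‖v‖ ^ 2 := by
  unfold mink liftVec
  simp only [Fin.cons_zero, Fin.cons_succ]
  rw [sum_sq_eq']

/-- for `(a,b) ∈ Ω`, both components of `Ψ(a,b)` lie on the
hyperboloid and `Φ(Ψ(a,b)) = (a,b)`. -/
theorem statement_7 {n : ℕ} (hn : 1 ≤ n) (a b : EuclideanSpace ℝ (Fin n))
    (hab : ‖a‖ + ‖b‖ < 2) :
    Psi1 a b ∈ Hyp n ∧ Psi2 a b ∈ Hyp n ∧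
    P1 (Psi1 a b) (Psi2 a b) = a ∧ P2 (Psi1 a b) (Psi2 a b) = b := by
  have hA : (0:ℝ) ≤ ‖a‖ := norm_nonneg a
  have hB : (0:ℝ) ≤ ‖b‖ := norm_nonneg b
  have hf : 0 < fQ a b := by
    have h1 : (0:ℝ) < 2 + ‖a‖ + ‖b‖ := by linarith
    have h2 : (0:ℝ) < 2 - ‖a‖ + ‖b‖ := by linarith
    have h3 : (0:ℝ) < 2 + ‖a‖ - ‖b‖ := by linarith
    have h4 : (0:ℝ) < 2 - ‖a‖ - ‖b‖ := by linarith
    exact mul_pos (mul_pos (mul_pos h1 h2) h3) h4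
  set r := Real.sqrt (fQ a b) with hrdef
  have hr : 0 < r := Real.sqrt_pos.mpr hf
  have hr2 : r ^ 2 = fQ a b := Real.sq_sqrt hf.le
  have hfne : fQ a b ≠ 0 := ne_of_gt hf
  have hxa : ‖(4 / r) • a‖ ^ 2 = 16 * ‖a‖ ^ 2 / fQ a b := by
    rw [norm_smul, Real.norm_eq_abs, abs_of_pos (by positivity : (0:ℝ) < 4 / r),
      ← hr2]
    field_simp
    ring
  have hxb : ‖(4 / r) • b‖ ^ 2 = 16 * ‖b‖ ^ 2 / fQ a b := by
    rw [norm_smul, Real.norm_eq_abs, abs_of_pos (by positivity : (0:ℝ) < 4 / r),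
      ← hr2]
    field_simp
    ring
  have hApos : 0 < 4 + ‖a‖ ^ 2 - ‖b‖ ^ 2 := by nlinarith
  have hBpos : 0 < 4 + ‖b‖ ^ 2 - ‖a‖ ^ 2 := by nlinarith
  have htx : Real.sqrt (‖(4 / r) • a‖ ^ 2 + 1) = (4 + ‖a‖ ^ 2 - ‖b‖ ^ 2) / r := by
    have h : ‖(4 / r) • a‖ ^ 2 + 1 = ((4 + ‖a‖ ^ 2 - ‖b‖ ^ 2) / r) ^ 2 := by
      rw [hxa, div_pow, hr2]
      field_simp
      unfold fQ
      ring
    rw [h, Real.sqrt_sq (by positivity)]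
  have hty : Real.sqrt (‖(4 / r) • b‖ ^ 2 + 1) = (4 + ‖b‖ ^ 2 - ‖a‖ ^ 2) / r := by
    have h : ‖(4 / r) • b‖ ^ 2 + 1 = ((4 + ‖b‖ ^ 2 - ‖a‖ ^ 2) / r) ^ 2 := by
      rw [hxb, div_pow, hr2]
      field_simp
      unfold fQ
      ring
    rw [h, Real.sqrt_sq (by positivity)]
  have hmem1 : Psi1 a b ∈ Hyp n := by
    constructor
    · show mink (Psi1 a b) (Psi1 a b) = -1
      unfold Psi1
      rw [mink_lift_self', Real.mul_self_sqrt (by positivity)]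
      ring
    · show 0 < Psi1 a b 0
      unfold Psi1 liftVec
      simp only [Fin.cons_zero]
      exact Real.sqrt_pos.mpr (by positivity)
  have hmem2 : Psi2 a b ∈ Hyp n := by
    constructor
    · show mink (Psi2 a b) (Psi2 a b) = -1
      unfold Psi2
      rw [mink_lift_self', Real.mul_self_sqrt (by positivity)]
      ring
    · show 0 < Psi2 a b 0
      unfold Psi2 liftVec
      simp only [Fin.cons_zero]
      exact Real.sqrt_pos.mpr (by positivity)
  have hsum : Psi1 a b 0 + Psi2 a b 0 = 8 / r := by
    unfold Psi1 Psi2 liftVec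
    simp only [Fin.cons_zero]
    rw [htx, hty]
    rw [← add_div]
    ring_nf
  have hmink : mink (Psi1 a b + Psi2 a b) (eVec n) = -(8 / r) := by
    rw [mink_e']
    rw [Pi.add_apply, hsum]
  have hscal : 2 / -(-(8 / r)) * (4 / r) = 1 := by
    rw [neg_neg]
    field_simp
    ring
  refine ⟨hmem1, hmem2, ?_, ?_⟩
  · unfold P1
    rw [hmink]
    have hp : proj (Psi1 a b) = (4 / r) • a := proj_lift' _ _
    rw [hp, smul_smul, hscal, one_smul]
  · unfold P2
    rw [hmink]
    have hp : proj (Psi2 a b) = (4 / r) • b := proj_lift' _ _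
    rw [hp, smul_smul, hscal, one_smul]
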